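/- Let T : X → X and S : Y → Y be measurable, Λ : X → Y measurable with S ∘ Λ = Λ ∘ T, and μ a T-AMS probability measure on X. Define the joint measure ρ on X × Y by ρ(A × B) = μ(A ∩ Λ⁻¹B), extended to the product σ-field. Then ρ is (T × S)-AMS, where (T × S)(x, y) = (T(x), S(y)). -/

import Mathlib

open MeasureTheory Filter Finset

theorem joint_measure_is_product_ams
    {X Y : Type*} [MeasurableSpace X] [MeasurableSpace Y]
    (T : X → X) (hT : Measurable T) (S : Y → Y) (hS : Measurable S)
    (Λ : X → Y) (hΛ : Measurable Λ) (hcomm : ∀ x, S (Λ x) = Λ (T x))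
    (μ : Measure X) [IsProbabilityMeasure μ]
    (hAMS : ∀ A : Set X, MeasurableSet A → ∃ L : ℝ,
      Tendsto (fun n : ℕ => (1 / (n : ℝ)) * ∑ i ∈ Finset.range n, (μ (T^[i] ⁻¹' A)).toReal)
        atTop (nhds L)) :
    ∀ E : Set (X × Y), MeasurableSet E → ∃ L : ℝ,
      Tendsto (fun n : ℕ =>
          (1 / (n : ℝ)) * ∑ i ∈ Finset.range n,
            ((μ.map (fun x => (x, Λ x))) ((Prod.map T S)^[i] ⁻¹' E)).toReal)
        atTop (nhds L) := by
  intro E hE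
  have hg : Measurable (fun x => (x, Λ x)) := measurable_id.prodMk hΛ
  have hTi : ∀ i : ℕ, Measurable (T^[i]) := fun i => hT.iterate i
  have hSi : ∀ i : ℕ, Measurable (S^[i]) := fun i => hS.iterate i
  have hcomm' : ∀ (i : ℕ) (x : X), S^[i] (Λ x) = Λ (T^[i] x) := by
    intro i
    induction i with
    | zero => intro x; simp
    | succ n ih =>
      intro x
      simp only [Function.iterate_succ_apply', ih, hcomm]
  have key : ∀ i : ℕ,
      (μ.map (fun x => (x, Λ x))) ((Prod.map T S)^[i] ⁻¹' E)
        = μ (T^[i] ⁻¹' ((fun x => (x, Λ x)) ⁻¹' E)) := by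
    intro i
    rw [Prod.map_iterate, Measure.map_apply hg (((hTi i).prodMap (hSi i)) hE)]
    congr 1
    ext x
    simp [Prod.map_iterate, Prod.map, hcomm' i x]
  set A := (fun x => (x, Λ x)) ⁻¹' E with hA
  have hAm : MeasurableSet A := hg hE
  obtain ⟨L, hL⟩ := hAMS A hAm
  exact ⟨L, by simpa only [key] using hL⟩
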